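/- For all natural numbers r and l with r ≥ 3 and l ≥ 2, one has ((r+2)!)^l · l! < (r^l + 1)!. -/

import Mathlib

lemma aux_bell_two_le (n l : ℕ) (hn : 2 ≤ n) (hl : 2 ≤ l) :
    2 ≤ Nat.uniformBell l n := by
  have hprod := Nat.uniformBell_eq l n
  have h1 : (1 : ℕ) ∈ Finset.range l := Finset.mem_range.mpr (by omega)
  have hfac : 2 ≤ Nat.choose (1 * n + n - 1) (n - 1) := by
    have h1n : Nat.choose n (n - 1) = n := by
      rw [Nat.choose_symm (by omega : 1 ≤ n), Nat.choose_one_right]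
    calc 2 ≤ n := hn
    _ = Nat.choose n (n - 1) := h1n.symm
    _ ≤ Nat.choose (1 * n + n - 1) (n - 1) := Nat.choose_le_choose _ (by omega)
  calc 2 ≤ Nat.choose (1 * n + n - 1) (n - 1) := hfac
  _ ≤ ∏ p ∈ Finset.range l, Nat.choose (p * n + n - 1) (n - 1) := by
      refine Finset.single_le_prod' (f := fun p => Nat.choose (p * n + n - 1) (n - 1)) ?_ h1
      intro i _
      exact Nat.choose_pos (by omega)
  _ = Nat.uniformBell l n := hprod.symm

lemma aux_key (n l : ℕ) (hn : 2 ≤ n) (hl : 2 ≤ l) :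
    Nat.factorial n ^ l * Nat.factorial l < Nat.factorial (l * n) := by
  have hmul := Nat.uniformBell_mul_eq l (show n ≠ 0 by omega)
  have hB := aux_bell_two_le n l hn hl
  have hpos : 0 < Nat.factorial n ^ l * Nat.factorial l :=
    Nat.mul_pos (pow_pos (Nat.factorial_pos n) _) (Nat.factorial_pos l)
  calc Nat.factorial n ^ l * Nat.factorial l
      < 2 * (Nat.factorial n ^ l * Nat.factorial l) := by omega
  _ ≤ Nat.uniformBell l n * (Nat.factorial n ^ l * Nat.factorial l) :=
      Nat.mul_le_mul_right _ hB
  _ = Nat.factorial (l * n) := by rw [← hmul]; ring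
  
lemma aux_le (r l : ℕ) (hr : 3 ≤ r) (hl : 2 ≤ l) : l * (r + 2) ≤ r ^ l + 1 := by
  induction l with
  | zero => omega
  | succ k ih =>
    rcases Nat.lt_or_ge k 2 with hk | hk
    · interval_cases k
      · omega
      · simp only [pow_succ, pow_one]
        nlinarith
    · have h1 := ih (by omega)
      have h2 : r ≤ r ^ k := Nat.le_self_pow (by omega) r
      have h3 : r ^ (k + 1) = r ^ k * r := pow_succ r k
      nlinarith

theorem stmt_14 (r l : ℕ) (hr : 3 ≤ r) (hl : 2 ≤ l) :
    Nat.factorial (r + 2) ^ l * Nat.factorial l < Nat.factorial (r ^ l + 1) := by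
  calc Nat.factorial (r + 2) ^ l * Nat.factorial l
      < Nat.factorial (l * (r + 2)) := aux_key (r + 2) l (by omega) hl
  _ ≤ Nat.factorial (r ^ l + 1) := Nat.factorial_le (aux_le r l hr hl)
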